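/- Let (p,q) and (r,s) be pairs of coprime integers with |p·s − q·r| = 1 (so that [p,q] and [r,s] are adjacent vertices of the Farey graph). Then a pair of coprime integers (a,b) satisfies both |a·q − b·p| = 1 and |a·s − b·r| = 1 if and only if (a,b) = ±(p+r, q+s) or (a,b) = ±(p−r, q−s). Consequently, every edge of the Farey graph is contained in exactly two triangles, whose third vertices are the two 'mediants' [p+r, q+s] and [p−r, q−s]. -/

import Mathlib

/-- A Farey pair: a pair of coprime integers. -/
abbrev FareyPair : Type := {v : ℤ × ℤ // IsCoprime v.1 v.2}

/-- Identify a coprime pair of integers with its negative. -/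
instance fareySetoid : Setoid FareyPair where
  r a b := a.1 = b.1 ∨ a.1 = -b.1
  iseqv := by
    refine ⟨fun a => Or.inl rfl, ?_, ?_⟩
    · rintro a b (h | h)
      · exact Or.inl h.symm
      · exact Or.inr (by rw [h, neg_neg])
    · rintro a b c (h1 | h1) (h2 | h2)
      · exact Or.inl (h1.trans h2)
      · exact Or.inr (h1.trans h2)
      · exact Or.inr (by rw [h1, h2])
      · exact Or.inl (by rw [h1, h2, neg_neg])

/-- Vertices of the Farey graph: coprime integer pairs up to sign. -/
abbrev FareyVertex : Type := Quotient fareySetoid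

/-- The Farey vertex `[p, q]` determined by a coprime pair `(p, q)`. -/
def fareyMk (p q : ℤ) (h : IsCoprime p q) : FareyVertex :=
  Quotient.mk fareySetoid ⟨(p, q), h⟩

/-- The absolute value of the determinant, descended to Farey vertices. -/
def fareyDetAbs : FareyVertex → FareyVertex → ℤ :=
  Quotient.lift₂ (fun a b : FareyPair => |a.1.1 * b.1.2 - a.1.2 * b.1.1|)
    (by
      rintro a b a' b' (h1 | h1) (h2 | h2)
      · simp only [h1, h2]
      · simp only [h1, h2, Prod.fst_neg, Prod.snd_neg]
        apply abs_eq_abs.mpr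
        right; ring
      · simp only [h1, h2, Prod.fst_neg, Prod.snd_neg]
        apply abs_eq_abs.mpr
        right; ring
      · simp only [h1, h2, Prod.fst_neg, Prod.snd_neg]
        apply abs_eq_abs.mpr
        left; ring)

lemma fareyDetAbs_comm (u v : FareyVertex) : fareyDetAbs u v = fareyDetAbs v u := by
  refine Quotient.inductionOn₂ u v fun a b => ?_
  show |a.1.1 * b.1.2 - a.1.2 * b.1.1| = |b.1.1 * a.1.2 - b.1.2 * a.1.1|
  rw [abs_sub_comm]
  exact congrArg abs (by ring)

/-- The Farey graph: coprime integer pairs up to sign, adjacent when the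
determinant is `±1`. -/
def FareyGraph : SimpleGraph FareyVertex where
  Adj u v := fareyDetAbs u v = 1
  symm := by
    refine ⟨?_⟩
    intro u v h
    rwa [fareyDetAbs_comm]
  loopless := by
    refine ⟨?_⟩
    intro u
    refine Quotient.inductionOn u fun a => ?_
    show ¬(|a.1.1 * a.1.2 - a.1.2 * a.1.1| = 1)
    rw [show a.1.1 * a.1.2 - a.1.2 * a.1.1 = 0 from by ring]
    simp

/-- A pair of integers forming a unimodular matrix with another pair is coprime. -/
lemma coprime_of_det (a b c d : ℤ) (h : |a * d - b * c| = 1) : IsCoprime a b := by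
  rcases (abs_eq (by norm_num : (0:ℤ) ≤ 1)).mp h with h' | h'
  · exact ⟨d, -c, by linear_combination h'⟩
  · exact ⟨-d, c, by linear_combination -h'⟩

/-- If `(p,q)` and `(r,s)` are coprime pairs with `|ps - qr| = 1`
(so `[p,q]` and `[r,s]` are adjacent in the Farey graph), then a coprime pair `(a,b)`
satisfies `|aq - bp| = 1` and `|as - br| = 1` iff `(a,b) = ±(p+r, q+s)` or
`(a,b) = ±(p-r, q-s)`.  Consequently the edge from `[p,q]` to `[r,s]` lies in exactly
two triangles, whose third vertices are the two mediants `[p+r, q+s]` and `[p-r, q-s]`. -/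
theorem farey_edge_in_exactly_two_triangles (p q r s : ℤ)
    (hpq : IsCoprime p q) (hrs : IsCoprime r s) (h : |p * s - q * r| = 1) :
    (∀ a b : ℤ, IsCoprime a b →
      ((|a * q - b * p| = 1 ∧ |a * s - b * r| = 1) ↔
        ((a, b) = (p + r, q + s) ∨ (a, b) = (-(p + r), -(q + s)) ∨
         (a, b) = (p - r, q - s) ∨ (a, b) = (-(p - r), -(q - s))))) ∧
    ∃ (h₁ : IsCoprime (p + r) (q + s)) (h₂ : IsCoprime (p - r) (q - s)),
      fareyMk (p + r) (q + s) h₁ ≠ fareyMk (p - r) (q - s) h₂ ∧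
      {w : FareyVertex | FareyGraph.Adj (fareyMk p q hpq) w ∧
          FareyGraph.Adj (fareyMk r s hrs) w} =
        {fareyMk (p + r) (q + s) h₁, fareyMk (p - r) (q - s) h₂} := by
  have key : ∀ x : ℤ, (x = p * s - q * r ∨ x = -(p * s - q * r)) → |x| = 1 := by
    rintro x (rfl | rfl)
    · exact h
    · rwa [abs_neg]
  have main : ∀ a b : ℤ, IsCoprime a b →
      ((|a * q - b * p| = 1 ∧ |a * s - b * r| = 1) ↔
        ((a, b) = (p + r, q + s) ∨ (a, b) = (-(p + r), -(q + s)) ∨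
         (a, b) = (p - r, q - s) ∨ (a, b) = (-(p - r), -(q - s)))) := by
    intro a b hab
    constructor
    · rintro ⟨h1, h2⟩
      have ha : a * (p * s - q * r) = p * (a * s - b * r) - r * (a * q - b * p) := by ring
      have hb : b * (p * s - q * r) = q * (a * s - b * r) - s * (a * q - b * p) := by ring
      rcases (abs_eq (by norm_num : (0:ℤ) ≤ 1)).mp h with he | he <;>
      rcases (abs_eq (by norm_num : (0:ℤ) ≤ 1)).mp h1 with h1' | h1' <;>
      rcases (abs_eq (by norm_num : (0:ℤ) ≤ 1)).mp h2 with h2' | h2' <;>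
      · rw [he, h1', h2'] at ha hb
        simp only [Prod.mk.injEq]
        omega
    · rintro (heq | heq | heq | heq) <;> obtain ⟨rfl, rfl⟩ := Prod.mk.injEq .. ▸ heq
      · exact ⟨key ((p+r)*q - (q+s)*p) (Or.inr (by ring)),
               key ((p+r)*s - (q+s)*r) (Or.inl (by ring))⟩
      · exact ⟨key ((-(p+r))*q - (-(q+s))*p) (Or.inl (by ring)),
               key ((-(p+r))*s - (-(q+s))*r) (Or.inr (by ring))⟩
      · exact ⟨key ((p-r)*q - (q-s)*p) (Or.inl (by ring)),
               key ((p-r)*s - (q-s)*r) (Or.inl (by ring))⟩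
      · exact ⟨key ((-(p-r))*q - (-(q-s))*p) (Or.inr (by ring)),
               key ((-(p-r))*s - (-(q-s))*r) (Or.inr (by ring))⟩
  refine ⟨main, ?_⟩
  have h₁ : IsCoprime (p + r) (q + s) :=
    coprime_of_det _ _ r s (key _ (by left; ring))
  have h₂ : IsCoprime (p - r) (q - s) :=
    coprime_of_det _ _ r s (key _ (by left; ring))
  refine ⟨h₁, h₂, ?_, ?_⟩
  · intro heq
    have hq := Quotient.exact heq
    rcases hq with hq | hq
    · have e1 : p + r = p - r := congrArg Prod.fst hq
      have e2 : q + s = q - s := congrArg Prod.snd hq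
      have : r = 0 := by omega
      have : s = 0 := by omega
      subst ‹r = 0›; subst ‹s = 0›
      exact not_isCoprime_zero_zero hrs
    · have e1 : p + r = -(p - r) := congrArg Prod.fst hq
      have e2 : q + s = -(q - s) := congrArg Prod.snd hq
      have : p = 0 := by omega
      have : q = 0 := by omega
      subst ‹p = 0›; subst ‹q = 0›
      exact not_isCoprime_zero_zero hpq
  · ext w
    refine Quotient.inductionOn w fun ab => ?_
    obtain ⟨⟨a, b⟩, hab⟩ := ab
    simp only [Set.mem_setOf_eq, Set.mem_insert_iff, Set.mem_singleton_iff]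
    have adj1 : FareyGraph.Adj (fareyMk p q hpq) (Quotient.mk fareySetoid ⟨(a, b), hab⟩)
        ↔ |a * q - b * p| = 1 := by
      show |p * b - q * a| = 1 ↔ _
      rw [show p * b - q * a = -(a * q - b * p) from by ring, abs_neg]
    have adj2 : FareyGraph.Adj (fareyMk r s hrs) (Quotient.mk fareySetoid ⟨(a, b), hab⟩)
        ↔ |a * s - b * r| = 1 := by
      show |r * b - s * a| = 1 ↔ _
      rw [show r * b - s * a = -(a * s - b * r) from by ring, abs_neg]
    have mem1 : Quotient.mk fareySetoid (⟨(a, b), hab⟩ : FareyPair) = fareyMk (p + r) (q + s) h₁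
        ↔ ((a, b) = (p + r, q + s) ∨ (a, b) = (-(p + r), -(q + s))) := by
      constructor
      · intro hq
        rcases Quotient.exact hq with hq | hq
        · exact Or.inl hq
        · exact Or.inr (by rw [Prod.neg_mk] at hq; exact hq)
      · rintro (hq | hq)
        · exact Quotient.sound (Or.inl hq)
        · exact Quotient.sound (Or.inr (by rw [Prod.neg_mk]; exact hq))
    have mem2 : Quotient.mk fareySetoid (⟨(a, b), hab⟩ : FareyPair) = fareyMk (p - r) (q - s) h₂
        ↔ ((a, b) = (p - r, q - s) ∨ (a, b) = (-(p - r), -(q - s))) := by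
      constructor
      · intro hq
        rcases Quotient.exact hq with hq | hq
        · exact Or.inl hq
        · exact Or.inr (by rw [Prod.neg_mk] at hq; exact hq)
      · rintro (hq | hq)
        · exact Quotient.sound (Or.inl hq)
        · exact Quotient.sound (Or.inr (by rw [Prod.neg_mk]; exact hq))
    constructor
    · rintro ⟨w1, w2⟩
      rcases (main a b hab).mp ⟨adj1.mp w1, adj2.mp w2⟩ with hc | hc | hc | hc
      · exact Or.inl (mem1.mpr (Or.inl hc))
      · exact Or.inl (mem1.mpr (Or.inr hc))
      · exact Or.inr (mem2.mpr (Or.inl hc))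
      · exact Or.inr (mem2.mpr (Or.inr hc))
    · rintro (hc | hc)
      · rcases mem1.mp hc with hc | hc
        · obtain ⟨u1, u2⟩ := (main a b hab).mpr (Or.inl hc)
          exact ⟨adj1.mpr u1, adj2.mpr u2⟩
        · obtain ⟨u1, u2⟩ := (main a b hab).mpr (Or.inr (Or.inl hc))
          exact ⟨adj1.mpr u1, adj2.mpr u2⟩
      · rcases mem2.mp hc with hc | hc
        · obtain ⟨u1, u2⟩ := (main a b hab).mpr (Or.inr (Or.inr (Or.inl hc)))
          exact ⟨adj1.mpr u1, adj2.mpr u2⟩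
        · obtain ⟨u1, u2⟩ := (main a b hab).mpr (Or.inr (Or.inr (Or.inr hc)))
          exact ⟨adj1.mpr u1, adj2.mpr u2⟩
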